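/- Fix n ≥ 1 and set b = ⌊log₂ n⌋ + 2. In (ℤ/2ℤ)[X₀, …, X_{b−1}], let I be the ideal generated by Xᵢ² − (2·Xᵢ + X_{i+1}) for 0 ≤ i ≤ b−2 together with X_{b−1}² (over ℤ/2ℤ these generators equal Xᵢ² − X_{i+1} and X_{b−1}²). If g is a multilinear polynomial (every exponent in every monomial of its support is at most 1) with (1 + X₀)ⁿ − g ∈ I, then the number of monomials in the support of g equals 2^{wt(n)}, where wt(n) is the number of ones in the binary expansion of n. Equivalently, lifting the coefficients of g to ℤ and evaluating at all variables equal to 1 yields the n-th term 𝒢ₙ = 2^{wt(n)} of Gould's sequence. -/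

import Mathlib

open MvPolynomial

/-- The generators of the ideal `I` over `ℤ/2ℤ`: `Xᵢ² − (2Xᵢ + X_{i+1})` for `i ≤ b-2`,
and `X_{b-1}²`. -/
noncomputable def gens (b : ℕ) : Fin b → MvPolynomial (Fin b) (ZMod 2) := fun i =>
  if h : (i : ℕ) + 1 < b then X i ^ 2 - (2 * X i + X ⟨(i : ℕ) + 1, h⟩) else X i ^ 2

/-- Injectivity of binary representations. -/
lemma bits_inj : ∀ (b : ℕ) (f g : ℕ → ℕ), (∀ i, f i ≤ 1) → (∀ i, g i ≤ 1) →
    (∑ i ∈ Finset.range b, f i * 2 ^ i) = (∑ i ∈ Finset.range b, g i * 2 ^ i) →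
    ∀ i < b, f i = g i := by
  intro b
  induction b with
  | zero => intro f g _ _ _ i hi; omega
  | succ b ih =>
    intro f g hf hg hsum i hi
    rw [Finset.sum_range_succ' _ b, Finset.sum_range_succ' _ b] at hsum
    have h2 : ∀ (f : ℕ → ℕ), ∑ i ∈ Finset.range b, f (i+1) * 2 ^ (i+1)
        = (∑ i ∈ Finset.range b, f (i+1) * 2 ^ i) * 2 := by
      intro f; rw [Finset.sum_mul]; exact Finset.sum_congr rfl fun i _ => by ring
    rw [h2 f, h2 g] at hsum
    have hf0 := hf 0
    have hg0 := hg 0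
    have hAB : (∑ i ∈ Finset.range b, f (i+1) * 2 ^ i)
        = (∑ i ∈ Finset.range b, g (i+1) * 2 ^ i) ∧ f 0 = g 0 := by
      constructor <;> omega
    rcases i with _ | j
    · exact hAB.2
    · exact ih (fun i => f (i+1)) (fun i => g (i+1)) (fun i => hf _) (fun i => hg _)
        hAB.1 j (by omega)

lemma sum_pow_two (b : ℕ) : ∑ i ∈ Finset.range b, 2 ^ i = 2 ^ b - 1 := by
  induction b with
  | zero => simp
  | succ b ih =>
    rw [Finset.sum_range_succ, ih]
    have := Nat.one_le_two_pow (n := b)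
    ring_nf
    omega

lemma expand_eq_sq (r : Polynomial (ZMod 2)) : Polynomial.expand (ZMod 2) 2 r = r ^ 2 := by
  have h := Polynomial.map_frobenius_expand (p := 2) r
  rwa [ZMod.frobenius_zmod, Polynomial.map_id] at h

lemma support_expand (r : Polynomial (ZMod 2)) :
    (Polynomial.expand (ZMod 2) 2 r).support = r.support.image (2 * ·) := by
  ext k
  simp only [Polynomial.mem_support_iff, Polynomial.coeff_expand (by norm_num : (0:ℕ) < 2),
    Finset.mem_image]
  by_cases h : 2 ∣ k
  · simp only [if_pos h]
    obtain ⟨j, rfl⟩ := h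
    constructor
    · intro hne; exact ⟨j, by simpa [Nat.mul_div_cancel_left] using hne, rfl⟩
    · rintro ⟨a, ha, h2⟩
      have : a = j := by omega
      subst this
      simpa [Nat.mul_div_cancel_left] using ha
  · simp only [if_neg h]
    constructor
    · intro hh; exact absurd rfl hh
    · rintro ⟨a, ha, rfl⟩; exact absurd ⟨a, rfl⟩ h

lemma support_mulX (s : Polynomial (ZMod 2)) :
    (s * Polynomial.X).support = s.support.image (· + 1) := by
  ext k
  simp only [Polynomial.mem_support_iff, Finset.mem_image]
  rw [← pow_one (Polynomial.X (R := ZMod 2)), Polynomial.coeff_mul_X_pow']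
  rcases k with _ | k
  · simp
  · simp only [if_pos (by omega : 1 ≤ k + 1), Nat.add_sub_cancel]
    constructor
    · intro h; exact ⟨k, h, rfl⟩
    · rintro ⟨a, ha, h2⟩
      have : a = k := by omega
      subst this; exact ha

lemma support_add_disj (p q : Polynomial (ZMod 2)) (h : Disjoint p.support q.support) :
    (p + q).support = p.support ∪ q.support := by
  ext k
  simp only [Polynomial.mem_support_iff, Finset.mem_union, Polynomial.coeff_add]
  by_cases hp : p.coeff k = 0 <;> by_cases hq : q.coeff k = 0 <;> simp [hp, hq]
  exact absurd (Finset.disjoint_left.mp h (Polynomial.mem_support_iff.mpr hp))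
    (by simpa [Polynomial.mem_support_iff] using hq)

lemma gould_count : ∀ n : ℕ, ((1 + Polynomial.X : Polynomial (ZMod 2)) ^ n).support.card
    = 2 ^ (Nat.digits 2 n).sum := by
  intro n
  induction n using Nat.strong_induction_on with
  | _ n ih =>
    rcases Nat.eq_zero_or_pos n with rfl | hn
    · rw [pow_zero, ← Polynomial.C_1, Polynomial.support_C one_ne_zero]; simp
    obtain ⟨m, hm⟩ : ∃ m, n / 2 = m := ⟨_, rfl⟩
    have hsq : ((1 + Polynomial.X : Polynomial (ZMod 2)) ^ (2 * m))
        = Polynomial.expand (ZMod 2) 2 ((1 + Polynomial.X) ^ m) := by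
      rw [expand_eq_sq, mul_comm, pow_mul]
    have hcard : ((1 + Polynomial.X : Polynomial (ZMod 2)) ^ (2 * m)).support.card
        = 2 ^ (Nat.digits 2 m).sum := by
      rw [hsq, support_expand, Finset.card_image_of_injective _ (fun a b => by omega)]
      exact ih m (by omega)
    have hdig : ∀ k : ℕ, 0 < 2 * m + k → k < 2 →
        (Nat.digits 2 (2 * m + k)).sum = k + (Nat.digits 2 m).sum := by
      intro k hpos hk
      rw [Nat.digits_def' (by norm_num : 1 < 2) hpos]
      have h1 : (2 * m + k) % 2 = k := by omega
      have h2 : (2 * m + k) / 2 = m := by omega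
      rw [h1, h2, List.sum_cons]
    rcases Nat.even_or_odd n with he | ho
    · have hn2 : n = 2 * m := by obtain ⟨k, hk⟩ := he; omega
      rw [hn2, hcard]
      have := hdig 0 (by omega) (by omega)
      simp only [Nat.add_zero] at this
      rw [this, Nat.zero_add]
    · have hn2 : n = 2 * m + 1 := by obtain ⟨k, hk⟩ := ho; omega
      set s := ((1 + Polynomial.X : Polynomial (ZMod 2)) ^ (2 * m)) with hs
      have hsplit : ((1 + Polynomial.X : Polynomial (ZMod 2)) ^ n) = s + s * Polynomial.X := by
        rw [hn2, pow_succ, mul_add, mul_one]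
      have hdisj : Disjoint s.support (s * Polynomial.X).support := by
        rw [support_mulX, hsq, support_expand]
        rw [Finset.disjoint_left]
        intro a ha hb
        simp only [Finset.mem_image] at ha hb
        obtain ⟨x, _, hx⟩ := ha
        obtain ⟨y, hy, hy2⟩ := hb
        obtain ⟨z, _, hz⟩ := hy
        omega
      rw [hsplit, support_add_disj _ _ hdisj, Finset.card_union_of_disjoint hdisj,
        support_mulX, Finset.card_image_of_injective _ (fun a b => by omega), hcard,
        hn2, hdig 1 (by omega) (by omega)]
      ring

/-- The substitution `Xᵢ ↦ Y^(2^i)`. -/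
noncomputable def psi (b : ℕ) : MvPolynomial (Fin b) (ZMod 2) →ₐ[ZMod 2] Polynomial (ZMod 2) :=
  aeval (fun i : Fin b => (Polynomial.X : Polynomial (ZMod 2)) ^ 2 ^ (i : ℕ))

def expo {b : ℕ} (m : Fin b →₀ ℕ) : ℕ := ∑ i : Fin b, 2 ^ (i : ℕ) * m i

lemma psi_monomial {b : ℕ} (m : Fin b →₀ ℕ) (c : ZMod 2) :
    psi b (monomial m c) = Polynomial.C c * Polynomial.X ^ expo m := by
  rw [psi, aeval_monomial, Finsupp.prod_pow]
  congr 1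
  rw [expo, ← Finset.prod_pow_eq_pow_sum]
  exact Finset.prod_congr rfl fun i _ => by rw [← pow_mul]

lemma psi_gens {b : ℕ} (i : Fin b) :
    psi b (gens b i) = if (i : ℕ) + 1 < b then 0 else Polynomial.X ^ 2 ^ b := by
  have h2 : (2 : MvPolynomial (Fin b) (ZMod 2)) = 0 := by
    have : ((2 : ℕ) : MvPolynomial (Fin b) (ZMod 2)) = C ((2 : ℕ) : ZMod 2) := by
      rw [MvPolynomial.C_eq_coe_nat]
    push_cast at this
    rw [this, show (2 : ZMod 2) = 0 from rfl, map_zero]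
  rw [gens]
  split_ifs with h
  · simp only [map_sub, map_add, map_mul, map_pow, h2, zero_mul, map_zero, zero_add, psi,
      aeval_X]
    rw [← pow_mul]
    have : 2 ^ (i : ℕ) * 2 = 2 ^ ((⟨(i : ℕ) + 1, h⟩ : Fin b) : ℕ) := by
      simp [pow_succ]
    rw [this, sub_self]
  · have hib : (i : ℕ) + 1 = b := by omega
    simp only [map_pow, psi, aeval_X]
    rw [← pow_mul, ← pow_succ, hib]

lemma expo_lt {b : ℕ} (m : Fin b →₀ ℕ) (hm : ∀ i, m i ≤ 1) : expo m < 2 ^ b := by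
  have h1 : expo m ≤ ∑ i : Fin b, 2 ^ (i : ℕ) := by
    apply Finset.sum_le_sum
    intro i _
    calc 2 ^ (i : ℕ) * m i ≤ 2 ^ (i : ℕ) * 1 := Nat.mul_le_mul_left _ (hm i)
      _ = 2 ^ (i : ℕ) := mul_one _
  have h2 : ∑ i : Fin b, 2 ^ (i : ℕ) = 2 ^ b - 1 := by
    rw [Fin.sum_univ_eq_sum_range (fun i => 2 ^ i) b]
    exact sum_pow_two b
  have := Nat.one_le_two_pow (n := b)
  omega

lemma expo_eq_range {b : ℕ} (m : Fin b →₀ ℕ) :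
    (∑ j ∈ Finset.range b, (if h : j < b then m ⟨j, h⟩ else 0) * 2 ^ j) = expo m := by
  rw [expo, ← Fin.sum_univ_eq_sum_range (fun j => (if h : j < b then m ⟨j, h⟩ else 0) * 2 ^ j) b]
  exact Finset.sum_congr rfl fun i _ => by simp [i.isLt, mul_comm]

lemma expo_inj {b : ℕ} (m m' : Fin b →₀ ℕ) (hm : ∀ i, m i ≤ 1) (hm' : ∀ i, m' i ≤ 1)
    (h : expo m = expo m') : m = m' := by
  have key := bits_inj b (fun j => if h : j < b then m ⟨j, h⟩ else 0)
    (fun j => if h : j < b then m' ⟨j, h⟩ else 0)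
    (fun j => by split_ifs with hj; exacts [hm _, Nat.zero_le 1])
    (fun j => by split_ifs with hj; exacts [hm' _, Nat.zero_le 1])
    (by rw [expo_eq_range, expo_eq_range]; exact h)
  ext i
  have := key (i : ℕ) i.isLt
  simpa [i.isLt] using this

lemma psi_support {b : ℕ} (g : MvPolynomial (Fin b) (ZMod 2))
    (hml : ∀ m ∈ g.support, ∀ i : Fin b, m i ≤ 1) :
    (psi b g).support = g.support.image expo := by
  have hrepr : psi b g = ∑ m ∈ g.support, Polynomial.C (coeff m g) * Polynomial.X ^ expo m := by
    conv_lhs => rw [← MvPolynomial.support_sum_monomial_coeff g]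
    rw [map_sum]
    exact Finset.sum_congr rfl fun m _ => psi_monomial m _
  ext k
  simp only [Polynomial.mem_support_iff, hrepr, Polynomial.finset_sum_coeff,
    Polynomial.coeff_C_mul, Polynomial.coeff_X_pow, Finset.mem_image]
  by_cases hk : ∃ m₀ ∈ g.support, expo m₀ = k
  · obtain ⟨m₀, hm₀, he⟩ := hk
    have hsum : (∑ m ∈ g.support, coeff m g * (if k = expo m then (1 : ZMod 2) else 0))
        = coeff m₀ g := by
      rw [Finset.sum_eq_single_of_mem m₀ hm₀]
      · rw [if_pos he.symm, mul_one]
      · intro m hm hne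
        rw [if_neg, mul_zero]
        intro hkm
        exact hne (expo_inj m m₀ (hml m hm) (hml m₀ hm₀) (by omega))
    rw [hsum]
    constructor
    · intro _; exact ⟨m₀, hm₀, he⟩
    · intro _; exact MvPolynomial.mem_support_iff.mp hm₀
  · have hsum : (∑ m ∈ g.support, coeff m g * (if k = expo m then (1 : ZMod 2) else 0))
        = 0 := Finset.sum_eq_zero fun m hm => by
      rw [if_neg fun hkm => hk ⟨m, hm, hkm.symm⟩, mul_zero]
    rw [hsum]
    constructor
    · intro h; exact absurd rfl h
    · rintro ⟨a, ha, hak⟩; exact absurd ⟨a, ha, hak⟩ hk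

theorem stmt4 (n : ℕ) (hn : 1 ≤ n) (b : ℕ) (hb : b = Nat.log 2 n + 2)
    (g : MvPolynomial (Fin b) (ZMod 2))
    (hml : ∀ m ∈ g.support, ∀ i : Fin b, m i ≤ 1)
    (hg : (1 + X (⟨0, by omega⟩ : Fin b)) ^ n - g ∈ Ideal.span (Set.range (gens b))) :
    g.support.card = 2 ^ (Nat.digits 2 n).sum := by
  have hnlt : n < 2 ^ b := by
    calc n < 2 ^ (Nat.log 2 n + 1) := Nat.lt_pow_succ_log_self (by norm_num) n
      _ ≤ 2 ^ b := Nat.pow_le_pow_right (by norm_num) (by omega)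
  have hdvd : (Polynomial.X : Polynomial (ZMod 2)) ^ 2 ^ b
      ∣ (1 + Polynomial.X) ^ n - psi b g := by
    have hle : Ideal.span ((psi b) '' Set.range (gens b))
        ≤ Ideal.span {(Polynomial.X : Polynomial (ZMod 2)) ^ 2 ^ b} := by
      rw [Ideal.span_le]
      rintro y ⟨x, ⟨i, rfl⟩, rfl⟩
      rw [SetLike.mem_coe, Ideal.mem_span_singleton, psi_gens]
      split_ifs
      · exact dvd_zero _
      · exact dvd_rfl
    have hmem := hle (by
      rw [← Ideal.map_span]
      exact Ideal.mem_map_of_mem _ hg)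
    rw [Ideal.mem_span_singleton] at hmem
    have hps : psi b ((1 + X (⟨0, by omega⟩ : Fin b)) ^ n - g)
        = (1 + Polynomial.X) ^ n - psi b g := by
      have hx0 : psi b (X (⟨0, by omega⟩ : Fin b)) = Polynomial.X := by
        rw [psi, aeval_X]; norm_num
      rw [map_sub, map_pow, map_add, map_one, hx0]
    rwa [hps] at hmem
  have hpsig : psi b g = (1 + Polynomial.X) ^ n := by
    by_contra hne
    have hD : (1 + Polynomial.X : Polynomial (ZMod 2)) ^ n - psi b g ≠ 0 :=
      sub_ne_zero.mpr (Ne.symm hne)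
    have hdeg := Polynomial.natDegree_le_of_dvd hdvd hD
    rw [Polynomial.natDegree_X_pow] at hdeg
    have h1 : ((1 + Polynomial.X : Polynomial (ZMod 2)) ^ n).natDegree < 2 ^ b := by
      have ha : ((1 + Polynomial.X : Polynomial (ZMod 2)) ^ n).natDegree
          ≤ n * (1 + Polynomial.X : Polynomial (ZMod 2)).natDegree :=
        Polynomial.natDegree_pow_le
      have hb1 : (1 + Polynomial.X : Polynomial (ZMod 2)).natDegree ≤ 1 := by
        apply le_trans (Polynomial.natDegree_add_le _ _)
        simp
      have := Nat.mul_le_mul_left n hb1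
      omega
    have h2 : (psi b g).natDegree < 2 ^ b := by
      rcases eq_or_ne (psi b g) 0 with h0 | h0
      · rw [h0, Polynomial.natDegree_zero]; positivity
      · have hmem := Polynomial.natDegree_mem_support_of_nonzero h0
        rw [psi_support g hml] at hmem
        obtain ⟨m, hm, he⟩ := Finset.mem_image.mp hmem
        rw [← he]; exact expo_lt m (hml m hm)
    have := Polynomial.natDegree_sub_le ((1 + Polynomial.X : Polynomial (ZMod 2)) ^ n) (psi b g)
    omega
  have hcards : (psi b g).support.card = g.support.card := by
    rw [psi_support g hml]
    exact Finset.card_image_of_injOn fun m hm m' hm' h =>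
      expo_inj m m' (hml m hm) (hml m' hm') h
  rw [← hcards, hpsig]
  exact gould_count n
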